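/- Let G be a finite simple graph with N ≥ 2 vertices and M ≥ 1 edges, with degree sequence d_(1) ≥ … ≥ d_(N), and let c be a {0,1}-characteristic with n1 ≥ 2 vertices having characteristic 1. Set δ = 2M/(N(N−1)), m̄11 = (n1(n1−1)/2)·δ, dyadicity D = m11/m̄11, UBm11 = min(M, binom(n1,2), ⌈(Σ_{i=1}^{n1} min(d_(i), n1−1))/2⌉), LBm11 = max(0, ⌊(T(n1) − H(n0))/2⌋) (difference in the integers), D_max = UBm11/m̄11 and D_min = LBm11/m̄11. Then D_min ≤ D ≤ D_max (as real numbers). -/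

import Mathlib

/-- The number of edges of `G` whose two endpoints both have characteristic `1` (`true`). -/
def m11 {V : Type*} [Fintype V] [DecidableEq V] (G : SimpleGraph V) [DecidableRel G.Adj]
    (c : V → Bool) : ℕ :=
  (G.edgeFinset.filter (fun e => ∀ v ∈ e, c v = true)).card

open Finset

/-- If `|P| = |Q|` and every value on `P` is at most every value on `Q`,
the sum over `P` is at most the sum over `Q`. -/
lemma pair_sum_le {α : Type*} (f : α → ℕ) (P Q : Finset α) (hc : P.card = Q.card)
    (h : ∀ p ∈ P, ∀ q ∈ Q, f p ≤ f q) : ∑ x ∈ P, f x ≤ ∑ x ∈ Q, f x := by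
  classical
  let σ := Finset.equivOfCardEq hc
  calc ∑ x ∈ P, f x = ∑ x ∈ P.attach, f x.1 := (Finset.sum_attach _ _).symm
    _ = ∑ x : {x // x ∈ P}, f x.1 := by rw [Finset.univ_eq_attach]
    _ ≤ ∑ x : {x // x ∈ P}, f (σ x).1 :=
        Finset.sum_le_sum fun x _ => h _ x.2 _ (σ x).2
    _ = ∑ y : {x // x ∈ Q}, f y.1 := Equiv.sum_comp σ (fun y => f y.1)
    _ = ∑ y ∈ Q.attach, f y.1 := by rw [Finset.univ_eq_attach]
    _ = ∑ x ∈ Q, f x := Finset.sum_attach _ _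

lemma card_head {N k : ℕ} (hk : k ≤ N) :
    (Finset.univ.filter (fun i : Fin N => (i : ℕ) < k)).card = k := by
  classical
  have himg : (Finset.univ.filter (fun i : Fin N => (i : ℕ) < k)).image (Fin.val)
      = Finset.range k := by
    ext m
    simp only [Finset.mem_image, Finset.mem_filter, Finset.mem_univ, true_and,
      Finset.mem_range]
    constructor
    · rintro ⟨i, hi, rfl⟩; exact hi
    · intro hm; exact ⟨⟨m, lt_of_lt_of_le hm hk⟩, hm, rfl⟩
  have := Finset.card_image_of_injective
    (Finset.univ.filter (fun i : Fin N => (i : ℕ) < k)) (Fin.val_injective)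
  rw [himg, Finset.card_range] at this
  omega

lemma card_tail {N k : ℕ} (hk : k ≤ N) :
    (Finset.univ.filter (fun i : Fin N => N - k ≤ (i : ℕ))).card = k := by
  classical
  have h1 := Finset.card_filter_add_card_filter_not
    (s := (Finset.univ : Finset (Fin N))) (p := fun i : Fin N => (i : ℕ) < N - k)
  have h2 : (Finset.univ.filter (fun i : Fin N => ¬ ((i : ℕ) < N - k)))
      = Finset.univ.filter (fun i : Fin N => N - k ≤ (i : ℕ)) := by
    apply Finset.filter_congr; intro i _; simp [not_lt]
  have h3 := card_head (N := N) (k := N - k) (by omega)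
  rw [h2, h3] at h1
  have h4 : (Finset.univ : Finset (Fin N)).card = N := by simp
  omega

/-- For an antitone `f`, the sum over any finset `B` is at most the sum over
the first `B.card` indices. -/
lemma sum_le_head {N : ℕ} (f : Fin N → ℕ) (hf : Antitone f) (B : Finset (Fin N)) :
    ∑ i ∈ B, f i ≤ ∑ i ∈ Finset.univ.filter (fun i : Fin N => (i : ℕ) < B.card), f i := by
  classical
  set k := B.card with hk
  set A := Finset.univ.filter (fun i : Fin N => (i : ℕ) < k) with hA
  have hkN : k ≤ N := by
    have := Finset.card_le_univ B
    simpa [hk] using this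
  have hAcard : A.card = k := card_head hkN
  have hdiff : (B \ A).card = (A \ B).card := by
    have h1 := Finset.card_sdiff_add_card_inter B A
    have h2 := Finset.card_sdiff_add_card_inter A B
    rw [Finset.inter_comm] at h2
    omega
  have hpair : ∑ x ∈ B \ A, f x ≤ ∑ x ∈ A \ B, f x := by
    apply pair_sum_le _ _ _ hdiff
    intro p hp q hq
    have hp' : ¬ ((p : ℕ) < k) := by
      have := (Finset.mem_sdiff.1 hp).2
      simpa [hA] using this
    have hq' : (q : ℕ) < k := by
      have := (Finset.mem_sdiff.1 hq).1
      simpa [hA] using this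
    exact hf (by rw [Fin.le_def]; omega)
  calc ∑ i ∈ B, f i = ∑ i ∈ B ∩ A, f i + ∑ i ∈ B \ A, f i :=
        (Finset.sum_inter_add_sum_sdiff _ _ _).symm
    _ ≤ ∑ i ∈ B ∩ A, f i + ∑ i ∈ A \ B, f i := Nat.add_le_add le_rfl hpair
    _ = ∑ i ∈ A ∩ B, f i + ∑ i ∈ A \ B, f i := by rw [Finset.inter_comm]
    _ = ∑ i ∈ A, f i := Finset.sum_inter_add_sum_sdiff _ _ _

/-- For an antitone `f`, the sum over the last `B.card` indices is at most the
sum over `B`. -/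
lemma tail_le_sum {N : ℕ} (f : Fin N → ℕ) (hf : Antitone f) (B : Finset (Fin N)) :
    ∑ i ∈ Finset.univ.filter (fun i : Fin N => N - B.card ≤ (i : ℕ)), f i ≤ ∑ i ∈ B, f i := by
  classical
  set k := B.card with hk
  set A := Finset.univ.filter (fun i : Fin N => N - k ≤ (i : ℕ)) with hA
  have hkN : k ≤ N := by
    have := Finset.card_le_univ B
    simpa [hk] using this
  have hAcard : A.card = k := card_tail hkN
  have hdiff : (A \ B).card = (B \ A).card := by
    have h1 := Finset.card_sdiff_add_card_inter B A
    have h2 := Finset.card_sdiff_add_card_inter A B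
    rw [Finset.inter_comm] at h2
    omega
  have hpair : ∑ x ∈ A \ B, f x ≤ ∑ x ∈ B \ A, f x := by
    apply pair_sum_le _ _ _ hdiff
    intro p hp q hq
    have hp' : N - k ≤ (p : ℕ) := by
      have := (Finset.mem_sdiff.1 hp).1
      simpa [hA] using this
    have hq' : ¬ (N - k ≤ (q : ℕ)) := by
      have := (Finset.mem_sdiff.1 hq).2
      simpa [hA] using this
    exact hf (by rw [Fin.le_def]; omega)
  calc ∑ i ∈ A, f i = ∑ i ∈ A ∩ B, f i + ∑ i ∈ A \ B, f i :=
        (Finset.sum_inter_add_sum_sdiff _ _ _).symm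
    _ ≤ ∑ i ∈ A ∩ B, f i + ∑ i ∈ B \ A, f i := Nat.add_le_add le_rfl hpair
    _ = ∑ i ∈ B ∩ A, f i + ∑ i ∈ B \ A, f i := by rw [Finset.inter_comm]
    _ = ∑ i ∈ B, f i := Finset.sum_inter_add_sum_sdiff _ _ _

/-- The subgraph of `G` with only those edges both of whose endpoints satisfy `c`. -/
def rG {V : Type*} (G : SimpleGraph V) (c : V → Bool) : SimpleGraph V where
  Adj a b := G.Adj a b ∧ c a = true ∧ c b = true
  symm := ⟨fun a b => by rintro ⟨h, ha, hb⟩; exact ⟨h.symm, hb, ha⟩⟩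
  loopless := ⟨fun a => by rintro ⟨h, _⟩; exact G.loopless.irrefl a h⟩

instance rG.decRel {V : Type*} (G : SimpleGraph V) [DecidableRel G.Adj] (c : V → Bool) :
    DecidableRel (rG G c).Adj :=
  fun a b => inferInstanceAs (Decidable (G.Adj a b ∧ c a = true ∧ c b = true))

lemma rG_edgeFinset {V : Type*} [Fintype V] [DecidableEq V] (G : SimpleGraph V)
    [DecidableRel G.Adj] (c : V → Bool) :
    (rG G c).edgeFinset = G.edgeFinset.filter (fun e => ∀ v ∈ e, c v = true) := by
  ext e
  refine Sym2.ind (fun a b => ?_) e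
  simp only [SimpleGraph.mem_edgeFinset, Finset.mem_filter, SimpleGraph.mem_edgeSet]
  constructor
  · rintro ⟨h, ha, hb⟩
    refine ⟨h, fun v hv => ?_⟩
    rcases Sym2.mem_iff.1 hv with rfl | rfl <;> assumption
  · rintro ⟨h, hall⟩
    exact ⟨h, hall a (Sym2.mem_mk_left a b), hall b (Sym2.mem_mk_right a b)⟩

lemma rG_degree_zero {V : Type*} [Fintype V] [DecidableEq V] (G : SimpleGraph V)
    [DecidableRel G.Adj] (c : V → Bool) {v : V} (hv : c v = false) :
    (rG G c).degree v = 0 := by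
  rw [SimpleGraph.degree, Finset.card_eq_zero]
  ext w
  simp only [SimpleGraph.mem_neighborFinset, Finset.notMem_empty, iff_false]
  rintro ⟨_, hcv, _⟩
  rw [hv] at hcv; exact Bool.false_ne_true hcv

lemma rG_neighborFinset {V : Type*} [Fintype V] [DecidableEq V] (G : SimpleGraph V)
    [DecidableRel G.Adj] (c : V → Bool) {v : V} (hv : c v = true) :
    (rG G c).neighborFinset v = (G.neighborFinset v).filter (fun w => c w = true) := by
  ext w
  simp only [SimpleGraph.mem_neighborFinset, Finset.mem_filter]
  constructor
  · rintro ⟨h, _, hw⟩; exact ⟨h, hw⟩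
  · rintro ⟨h, hw⟩; exact ⟨h, hv, hw⟩

/-- Double counting of cross edges. -/
lemma cross_count {V : Type*} [Fintype V] [DecidableEq V] (G : SimpleGraph V)
    [DecidableRel G.Adj] (c : V → Bool) :
    ∑ v ∈ Finset.univ.filter (fun v => c v = true),
        ((G.neighborFinset v).filter (fun w => c w = false)).card
      = ∑ w ∈ Finset.univ.filter (fun w => c w = false),
        ((G.neighborFinset w).filter (fun v => c v = true)).card := by
  have expand : ∀ (p q : V → Prop), ∀ (_ : DecidablePred p) (_ : DecidablePred q),
      ∑ v ∈ Finset.univ.filter p, ((G.neighborFinset v).filter q).card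
        = ∑ v : V, ∑ w : V, if p v ∧ G.Adj v w ∧ q w then 1 else 0 := by
    intro p q _ _
    rw [Finset.sum_filter]
    refine Finset.sum_congr rfl fun v _ => ?_
    by_cases hv : p v
    · simp only [hv, if_true, true_and]
      rw [Finset.card_filter, SimpleGraph.neighborFinset_eq_filter, Finset.sum_filter]
      exact Finset.sum_congr rfl fun w _ => by by_cases h : G.Adj v w <;> simp [h]
    · simp [hv]
  rw [expand _ _ inferInstance inferInstance, expand _ _ inferInstance inferInstance,
    Finset.sum_comm]
  refine Finset.sum_congr rfl fun w _ => Finset.sum_congr rfl fun v _ => ?_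
  congr 1
  simp only [eq_iff_iff]
  constructor
  · rintro ⟨h1, h2, h3⟩; exact ⟨h3, h2.symm, h1⟩
  · rintro ⟨h1, h2, h3⟩; exact ⟨h3, h2.symm, h1⟩

lemma degree_split {V : Type*} [Fintype V] [DecidableEq V] (G : SimpleGraph V)
    [DecidableRel G.Adj] (c : V → Bool) {v : V} (hv : c v = true) :
    G.degree v = (rG G c).degree v
      + ((G.neighborFinset v).filter (fun w => c w = false)).card := by
  have h := Finset.card_filter_add_card_filter_not
    (s := G.neighborFinset v) (p := fun w => c w = true)
  have h2 : (G.neighborFinset v).filter (fun w => ¬ (c w = true))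
      = (G.neighborFinset v).filter (fun w => c w = false) := by
    apply Finset.filter_congr; intro w _; simp
  rw [h2] at h
  rw [SimpleGraph.degree, SimpleGraph.degree, rG_neighborFinset G c hv]
  omega


/-- the dyadicity `D = m11 / m̄11` is bounded by
`D_min = LBm11 / m̄11` and `D_max = UBm11 / m̄11`, where
`UBm11 = min(M, binom(n1,2), ⌈(∑_{i=1}^{n1} min(d_(i), n1−1))/2⌉)` and
`LBm11 = max(0, ⌊(T(n1) − H(n0))/2⌋)` (difference in ℤ, floor division `Int.fdiv`). -/
theorem dyadicity_bounds {V : Type*} [Fintype V] [DecidableEq V]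
    (G : SimpleGraph V) [DecidableRel G.Adj] (c : V → Bool)
    (N M n1 n0 : ℕ) (hN : Fintype.card V = N) (hM : G.edgeFinset.card = M)
    (hn1 : (Finset.univ.filter (fun v => c v = true)).card = n1)
    (hn0 : n0 = N - n1)
    (hN2 : 2 ≤ N) (hM1 : 1 ≤ M) (hn12 : 2 ≤ n1)
    (d : Fin N → ℕ) (hanti : Antitone d)
    (e : Fin N ≃ V) (hd : ∀ i, d i = G.degree (e i))
    (UBm11 : ℕ)
    (hUB : UBm11 = min M (min (n1.choose 2)
      (((∑ i ∈ Finset.univ.filter (fun i : Fin N => (i : ℕ) < n1),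
          min (d i) (n1 - 1)) + 1) / 2)))
    (T H LBm11 : ℤ)
    (hT : T = ∑ i ∈ Finset.univ.filter (fun i : Fin N => N - n1 ≤ (i : ℕ)), (d i : ℤ))
    (hH : H = ∑ i ∈ Finset.univ.filter (fun i : Fin N => (i : ℕ) < n0), (d i : ℤ))
    (hLB : LBm11 = max 0 ((T - H).fdiv 2))
    (δ mbar11 D Dmax Dmin : ℝ)
    (hδ : δ = 2 * M / (N * ((N : ℝ) - 1)))
    (hmbar : mbar11 = ((n1 : ℝ) * ((n1 : ℝ) - 1) / 2) * δ)
    (hD : D = (m11 G c : ℝ) / mbar11)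
    (hDmax : Dmax = (UBm11 : ℝ) / mbar11)
    (hDmin : Dmin = (LBm11 : ℝ) / mbar11) :
    Dmin ≤ D ∧ D ≤ Dmax := by
  classical
  set S : Finset V := Finset.univ.filter (fun v => c v = true) with hS
  set Sf : Finset V := Finset.univ.filter (fun v => c v = false) with hSf
  have hcardV : (Finset.univ : Finset V).card = N := by rw [Finset.card_univ, hN]
  have hn1N : n1 ≤ N := by
    have h := Finset.card_le_univ S
    rw [hn1, hN] at h; exact h
  have hSfcard : Sf.card = N - n1 := by
    have h := Finset.card_filter_add_card_filter_not
      (s := (Finset.univ : Finset V)) (p := fun v => c v = true)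
    have h2 : Finset.univ.filter (fun v => ¬ (c v = true)) = Sf := by
      apply Finset.filter_congr; intro v _; simp [hSf]
    rw [h2, hcardV, hn1] at h
    omega
  -- handshake for the restricted graph
  have hhand : ∑ v ∈ S, (rG G c).degree v = 2 * m11 G c := by
    have h := SimpleGraph.sum_degrees_eq_twice_card_edges (rG G c)
    rw [rG_edgeFinset] at h
    have huniv : ∑ v ∈ S, (rG G c).degree v = ∑ v : V, (rG G c).degree v := by
      apply Finset.sum_subset (Finset.subset_univ S)
      intro v _ hv
      have hcv : c v = false := by
        by_contra hc
        exact hv (by simp [hS, Bool.not_eq_false] at hc ⊢; exact hc)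
      exact rG_degree_zero G c hcv
    rw [huniv, h]; rfl
  -- degree bounds within S
  have hdle : ∀ v ∈ S, (rG G c).degree v ≤ min (G.degree v) (n1 - 1) := by
    intro v hv
    have hcv : c v = true := by simpa [hS] using hv
    refine le_min ?_ ?_
    · apply Finset.card_le_card
      rw [rG_neighborFinset G c hcv]
      exact Finset.filter_subset _ _
    · have hsub : (rG G c).neighborFinset v ⊆ S.erase v := by
        intro w hw
        rw [SimpleGraph.mem_neighborFinset] at hw
        obtain ⟨hadj, _, hcw⟩ := hw
        exact Finset.mem_erase.2 ⟨hadj.ne', by simp [hS, hcw]⟩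
      have := Finset.card_le_card hsub
      rwa [Finset.card_erase_of_mem hv, hn1] at this
  -- transfer sums between Fin N and V
  set B : Finset (Fin N) := Finset.univ.filter (fun i => c (e i) = true) with hBdef
  set Bf : Finset (Fin N) := Finset.univ.filter (fun i => c (e i) = false) with hBfdef
  have htrans : ∀ (g : ℕ → ℕ) (b : Bool),
      ∑ i ∈ Finset.univ.filter (fun i => c (e i) = b), g (d i)
        = ∑ v ∈ Finset.univ.filter (fun v => c v = b), g (G.degree v) := by
    intro g b
    refine Finset.sum_bij (fun i _ => e i) ?_ ?_ ?_ ?_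
    · intro a ha; simp only [Finset.mem_filter, Finset.mem_univ, true_and] at ha ⊢; exact ha
    · intro a1 _ a2 _ h; exact e.injective h
    · intro v hv
      refine ⟨e.symm v, ?_, e.apply_symm_apply v⟩
      simp only [Finset.mem_filter, Finset.mem_univ, true_and, Equiv.apply_symm_apply] at hv ⊢
      exact hv
    · intro a _; rw [hd]
  have hBcard : B.card = n1 := by
    have : B.card = S.card := by
      refine Finset.card_bij (fun i _ => e i) ?_ ?_ ?_
      · intro a ha; simp only [hBdef, hS, Finset.mem_filter, Finset.mem_univ, true_and] at ha ⊢
        exact ha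
      · intro a1 _ a2 _ h; exact e.injective h
      · intro v hv
        refine ⟨e.symm v, ?_, e.apply_symm_apply v⟩
        simp only [hBdef, hS, Finset.mem_filter, Finset.mem_univ, true_and,
          Equiv.apply_symm_apply] at hv ⊢
        exact hv
    rw [this, hn1]
  have hBfcard : Bf.card = N - n1 := by
    have h := Finset.card_filter_add_card_filter_not
      (s := (Finset.univ : Finset (Fin N))) (p := fun i => c (e i) = true)
    have h2 : Finset.univ.filter (fun i : Fin N => ¬ (c (e i) = true)) = Bf := by
      apply Finset.filter_congr; intro i _; simp [hBfdef]
    have h3 : (Finset.univ : Finset (Fin N)).card = N := by simp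
    rw [h2, h3] at h
    have : (Finset.univ.filter (fun i : Fin N => c (e i) = true)).card = n1 := hBcard
    omega
  ----------------------------------------------------------------
  -- UPPER BOUND : m11 ≤ UBm11
  ----------------------------------------------------------------
  have h2m : 2 * m11 G c ≤ ∑ v ∈ S, min (G.degree v) (n1 - 1) := by
    rw [← hhand]; exact Finset.sum_le_sum hdle
  have hXle : ∑ v ∈ S, min (G.degree v) (n1 - 1)
      ≤ ∑ i ∈ Finset.univ.filter (fun i : Fin N => (i : ℕ) < n1), min (d i) (n1 - 1) := by
    rw [← htrans (fun x => min x (n1 - 1)) true]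
    have hanti' : Antitone (fun i => min (d i) (n1 - 1)) :=
      fun i j hij => min_le_min (hanti hij) le_rfl
    have := sum_le_head (fun i => min (d i) (n1 - 1)) hanti' B
    rwa [hBcard] at this
  have hm11UB : m11 G c ≤ UBm11 := by
    rw [hUB]
    refine le_min ?_ (le_min ?_ ?_)
    · rw [← hM]; exact Finset.card_filter_le _ _
    · rw [Nat.choose_two_right, Nat.le_div_iff_mul_le (by norm_num)]
      have h1 : 2 * m11 G c ≤ ∑ v ∈ S, (n1 - 1) :=
        le_trans h2m (Finset.sum_le_sum fun v _ => min_le_right _ _)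
      rw [Finset.sum_const, hn1, smul_eq_mul] at h1
      omega
    · rw [Nat.le_div_iff_mul_le (by norm_num)]
      have := le_trans h2m hXle
      omega
  ----------------------------------------------------------------
  -- LOWER BOUND : LBm11 ≤ m11
  ----------------------------------------------------------------
  have hsplit : ∑ v ∈ S, G.degree v = 2 * m11 G c
      + ∑ v ∈ S, ((G.neighborFinset v).filter (fun w => c w = false)).card := by
    rw [← hhand, ← Finset.sum_add_distrib]
    refine Finset.sum_congr rfl fun v hv => ?_
    exact degree_split G c (by simpa [hS] using hv)
  have hcross : ∑ v ∈ S, ((G.neighborFinset v).filter (fun w => c w = false)).card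
      ≤ ∑ w ∈ Sf, G.degree w := by
    rw [hS, cross_count G c]
    exact Finset.sum_le_sum fun w _ => Finset.card_filter_le _ _
  have hkey : ∑ v ∈ S, G.degree v ≤ 2 * m11 G c + ∑ w ∈ Sf, G.degree w := by
    rw [hsplit]; omega
  have hTn : ∑ i ∈ Finset.univ.filter (fun i : Fin N => N - n1 ≤ (i : ℕ)), d i
      ≤ ∑ v ∈ S, G.degree v := by
    have h1 := tail_le_sum d hanti B
    rw [hBcard] at h1
    have h2 : ∑ i ∈ B, d i = ∑ v ∈ S, G.degree v := by
      have := htrans (fun x => x) true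
      simpa using this
    rw [← h2]; exact h1
  have hHn : ∑ w ∈ Sf, G.degree w
      ≤ ∑ i ∈ Finset.univ.filter (fun i : Fin N => (i : ℕ) < n0), d i := by
    have h1 := sum_le_head d hanti Bf
    rw [hBfcard, ← hn0] at h1
    have h2 : ∑ i ∈ Bf, d i = ∑ w ∈ Sf, G.degree w := by
      have := htrans (fun x => x) false
      simpa using this
    rw [← h2]; exact h1
  have hTHnat : ∑ i ∈ Finset.univ.filter (fun i : Fin N => N - n1 ≤ (i : ℕ)), d i
      ≤ 2 * m11 G c + ∑ i ∈ Finset.univ.filter (fun i : Fin N => (i : ℕ) < n0), d i := by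
    calc _ ≤ ∑ v ∈ S, G.degree v := hTn
      _ ≤ 2 * m11 G c + ∑ w ∈ Sf, G.degree w := hkey
      _ ≤ _ := by omega
  have hTH : T - H ≤ 2 * (m11 G c : ℤ) := by
    have h := hTHnat
    have hTcast : T = ((∑ i ∈ Finset.univ.filter (fun i : Fin N => N - n1 ≤ (i : ℕ)), d i : ℕ) : ℤ) := by
      rw [hT]; push_cast; rfl
    have hHcast : H = ((∑ i ∈ Finset.univ.filter (fun i : Fin N => (i : ℕ) < n0), d i : ℕ) : ℤ) := by
      rw [hH]; push_cast; rfl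
    rw [hTcast, hHcast]
    have := Int.ofNat_le.2 h
    push_cast at this ⊢
    linarith
  have hLBm : LBm11 ≤ (m11 G c : ℤ) := by
    rw [hLB]
    refine max_le (by positivity) ?_
    rw [Int.fdiv_eq_ediv_of_nonneg _ (by norm_num)]
    have h1 : (T - H) / 2 ≤ (2 * (m11 G c : ℤ)) / 2 := Int.ediv_le_ediv (by norm_num) hTH
    rwa [Int.mul_ediv_cancel_left _ (by norm_num)] at h1
  ----------------------------------------------------------------
  -- real arithmetic
  ----------------------------------------------------------------
  have hmpos : 0 < mbar11 := by
    rw [hmbar, hδ]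
    have h1 : (0:ℝ) < (n1:ℝ) - 1 := by
      have : (2:ℝ) ≤ (n1:ℝ) := by exact_mod_cast hn12
      linarith
    have h2 : (0:ℝ) < (N:ℝ) - 1 := by
      have : (2:ℝ) ≤ (N:ℝ) := by exact_mod_cast hN2
      linarith
    have h3 : (0:ℝ) < (M:ℝ) := by exact_mod_cast hM1
    have h4 : (0:ℝ) < (n1:ℝ) := by positivity
    have h5 : (0:ℝ) < (N:ℝ) := by
      have : (2:ℝ) ≤ (N:ℝ) := by exact_mod_cast hN2
      linarith
    have h6 : (0:ℝ) < 2 * (M:ℝ) := by linarith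
    exact mul_pos (div_pos (mul_pos h4 h1) (by norm_num : (0:ℝ) < 2))
      (div_pos h6 (mul_pos h5 h2))
  constructor
  · rw [hDmin, hD]
    exact (div_le_div_iff_of_pos_right hmpos).2 (by exact_mod_cast hLBm)
  · rw [hD, hDmax]
    exact (div_le_div_iff_of_pos_right hmpos).2 (by exact_mod_cast hm11UB)
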